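/- arXiv:2101.07795 — 2 statements merged into one kernel-verified Lean document; each statement's English description precedes it below -/
import Mathlib

section
/- Let D_p and D_r be N×N diagonal matrices with positive diagonal entries, and set L = D_r^{1/2} D_p^{−1/2}. Let s₀,…,s_K ∈ ℝ^N and q₀,…,q_K ∈ ℝ^N, and let V be an N×N real matrix satisfying (i) Vᵀ D_p V = D_p and (ii) V L s_k = q_k for all 0 ≤ k ≤ K. Then Lᵀ Vᵀ (D_p − Σ_{k=0}^K D_p q_k q_kᵀ D_p) V L = D_r − Σ_{k=0}^K D_r s_k s_kᵀ D_r; equivalently, for all ψ, ψ̃ ∈ ℝ^N, ψᵀ Lᵀ Vᵀ (D_p − Σ_k D_p q_k q_kᵀ D_p) V L ψ̃ = ψᵀ (D_r − Σ_k D_r s_k s_kᵀ D_r) ψ̃. (Hence the rotated process v_P^q(V L ψ) has the same covariance structure as v_R^s(ψ), proving the validity of the Khmaladze rotation.) -/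
open Matrix

/-- If `V` preserves the `P`-norm (`Vᵀ D_p V = D_p`) and maps
`L s_k` to `q_k` for `0 ≤ k ≤ K`, where `L = D_r^{1/2} D_p^{-1/2}`, then
`Lᵀ Vᵀ (D_p - Σ_k D_p q_k q_kᵀ D_p) V L = D_r - Σ_k D_r s_k s_kᵀ D_r`:
the rotated process `v_P^q(V L ψ)` has the same covariance structure as
`v_R^s(ψ)`, proving the validity of the Khmaladze rotation. -/
theorem khmaladze_rotation_covariance {N K : ℕ} (hN : 0 < N)
    (p r : Fin N → ℝ) (hp : ∀ j, 0 < p j) (hr : ∀ j, 0 < r j)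
    (s q : Fin (K + 1) → Fin N → ℝ) (V : Matrix (Fin N) (Fin N) ℝ)
    (L : Matrix (Fin N) (Fin N) ℝ)
    (hL : L = Matrix.diagonal (fun j => Real.sqrt (r j)) *
      (Matrix.diagonal (fun j => Real.sqrt (p j)))⁻¹)
    (hV : Vᵀ * Matrix.diagonal p * V = Matrix.diagonal p)
    (hVq : ∀ k, V *ᵥ (L *ᵥ s k) = q k) :
    Lᵀ * Vᵀ *
        (Matrix.diagonal p -
          ∑ k, Matrix.diagonal p * vecMulVec (q k) (q k) * Matrix.diagonal p) *
        V * L =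
      Matrix.diagonal r -
        ∑ k, Matrix.diagonal r * vecMulVec (s k) (s k) * Matrix.diagonal r := by
  have hpsqrt : ∀ j, Real.sqrt (p j) ≠ 0 := fun j =>
    ne_of_gt (Real.sqrt_pos.2 (hp j))
  have hinv : (Matrix.diagonal (fun j => Real.sqrt (p j)))⁻¹ =
      Matrix.diagonal (fun j => (Real.sqrt (p j))⁻¹) := by
    apply Matrix.inv_eq_right_inv
    rw [Matrix.diagonal_mul_diagonal]
    rw [show (fun j => Real.sqrt (p j) * (Real.sqrt (p j))⁻¹) = fun _ => (1 : ℝ) by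
      funext j; exact mul_inv_cancel₀ (hpsqrt j)]
    exact Matrix.diagonal_one
  have hLd : L = Matrix.diagonal (fun j => Real.sqrt (r j) * (Real.sqrt (p j))⁻¹) := by
    rw [hL, hinv, Matrix.diagonal_mul_diagonal]
  have hLT : Lᵀ = L := by rw [hLd, Matrix.diagonal_transpose]
  have hLDL : L * Matrix.diagonal p * L = Matrix.diagonal r := by
    rw [hLd, Matrix.diagonal_mul_diagonal, Matrix.diagonal_mul_diagonal]
    refine congrArg Matrix.diagonal (funext fun j => ?_)
    have hps : Real.sqrt (p j) * Real.sqrt (p j) = p j :=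
      Real.mul_self_sqrt (hp j).le
    have hrs : Real.sqrt (r j) * Real.sqrt (r j) = r j :=
      Real.mul_self_sqrt (hr j).le
    rw [← hps]
    conv_rhs => rw [← hrs]
    field_simp [hpsqrt j]
    rw [Real.sqrt_sq (Real.sqrt_nonneg (p j))]
  have hkey : Lᵀ * Vᵀ * Matrix.diagonal p * V * L = Matrix.diagonal r := by
    calc Lᵀ * Vᵀ * Matrix.diagonal p * V * L
        = Lᵀ * (Vᵀ * Matrix.diagonal p * V) * L := by
          simp only [Matrix.mul_assoc]
      _ = L * Matrix.diagonal p * L := by rw [hV, hLT]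
      _ = Matrix.diagonal r := hLDL
  have h1 : ∀ (A : Matrix (Fin N) (Fin N) ℝ) (u v : Fin N → ℝ),
      (A * vecMulVec u v) = vecMulVec (A *ᵥ u) v := by
    intro A u v
    ext i j
    simp [Matrix.mul_apply, Matrix.vecMulVec_apply, Matrix.mulVec, dotProduct,
      Finset.sum_mul, mul_assoc]
  have h2 : ∀ (A : Matrix (Fin N) (Fin N) ℝ) (u v : Fin N → ℝ),
      (vecMulVec u v * A) = vecMulVec u (Aᵀ *ᵥ v) := by
    intro A u v
    ext i j
    simp only [Matrix.mul_apply, Matrix.vecMulVec_apply, Matrix.mulVec, dotProduct,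
      Finset.mul_sum, Matrix.transpose_apply]
    congr 1; funext x; ring
  have hterm : ∀ k, Lᵀ * Vᵀ *
      (Matrix.diagonal p * vecMulVec (q k) (q k) * Matrix.diagonal p) * V * L =
      Matrix.diagonal r * vecMulVec (s k) (s k) * Matrix.diagonal r := by
    intro k
    have hq : q k = (V * L) *ᵥ s k := by rw [← hVq k, Matrix.mulVec_mulVec]
    have hAq : (Lᵀ * Vᵀ * Matrix.diagonal p) *ᵥ q k =
        Matrix.diagonal r *ᵥ s k := by
      rw [hq, Matrix.mulVec_mulVec, show Lᵀ * Vᵀ * Matrix.diagonal p * (V * L) =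
        Lᵀ * Vᵀ * Matrix.diagonal p * V * L from by rw [Matrix.mul_assoc
        (Lᵀ * Vᵀ * Matrix.diagonal p) V L], hkey]
    have hsym : (Matrix.diagonal p * V * L)ᵀ = Lᵀ * Vᵀ * Matrix.diagonal p := by
      simp [Matrix.transpose_mul, Matrix.diagonal_transpose, Matrix.mul_assoc]
    calc Lᵀ * Vᵀ * (Matrix.diagonal p * vecMulVec (q k) (q k) * Matrix.diagonal p)
          * V * L
        = ((Lᵀ * Vᵀ * Matrix.diagonal p) * vecMulVec (q k) (q k)) *
            (Matrix.diagonal p * V * L) := by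
          simp only [Matrix.mul_assoc]
      _ = vecMulVec (Matrix.diagonal r *ᵥ s k) (Matrix.diagonal r *ᵥ s k) := by
          rw [h1, h2, hsym, hAq]
      _ = Matrix.diagonal r * vecMulVec (s k) (s k) * Matrix.diagonal r := by
          rw [h1, h2, Matrix.diagonal_transpose]
  have expand : Lᵀ * Vᵀ *
      (Matrix.diagonal p -
        ∑ k, Matrix.diagonal p * vecMulVec (q k) (q k) * Matrix.diagonal p) * V * L =
      Lᵀ * Vᵀ * Matrix.diagonal p * V * L -
      ∑ k, Lᵀ * Vᵀ * (Matrix.diagonal p * vecMulVec (q k) (q k) * Matrix.diagonal p)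
        * V * L := by
    rw [Matrix.mul_sub, Matrix.sub_mul, Matrix.sub_mul, Matrix.mul_sum,
      Finset.sum_mul, Finset.sum_mul]
  rw [expand, hkey]
  congr 1
  exact Finset.sum_congr rfl fun k _ => hterm k
end

section
/- Let D_p be an N×N diagonal matrix with positive diagonal entries, and let (q_k)_{k=0}^K and (a_k)_{k=0}^K be two D_p-orthonormal families in ℝ^N. Define V_{−1} = I and, recursively for j = 0, 1, …, K: ã_j = V_{j−1} a_j; assume q_jᵀ D_p ã_j ≠ 1; W_j = I − c_j (q_j − ã_j)(q_j − ã_j)ᵀ D_p with c_j = 1/(1 − q_jᵀ D_p ã_j); and V_j = W_j V_{j−1}. Then the matrix V_K satisfies V_K a_k = q_k for all 0 ≤ k ≤ K, and V_Kᵀ D_p V_K = D_p. -/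
open Matrix

private lemma vmv_mulVec {N : ℕ} (u v x : Fin N → ℝ) :
    vecMulVec u v *ᵥ x = (v ⬝ᵥ x) • u := by
  ext i
  simp only [vecMulVec_apply, mulVec, dotProduct, Pi.smul_apply, smul_eq_mul, Finset.sum_mul]
  exact Finset.sum_congr rfl (fun k _ => by ring)

private lemma vmv_transpose {N : ℕ} (u v : Fin N → ℝ) :
    (vecMulVec u v)ᵀ = vecMulVec v u := by
  ext i j; simp [vecMulVec_apply, mul_comm]

private lemma vmv_mul {N : ℕ} (u v : Fin N → ℝ) (M : Matrix (Fin N) (Fin N) ℝ) :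
    vecMulVec u v * M = vecMulVec u (v ᵥ* M) := by
  ext i j
  simp only [vecMulVec_apply, mul_apply, vecMul, dotProduct, Finset.mul_sum]
  exact Finset.sum_congr rfl (fun k _ => by ring)

private lemma vmv_mul_vmv {N : ℕ} (u v w z : Fin N → ℝ) :
    vecMulVec u v * vecMulVec w z = (v ⬝ᵥ w) • vecMulVec u z := by
  ext i j
  simp only [vecMulVec_apply, mul_apply, dotProduct, Matrix.smul_apply, smul_eq_mul, Finset.sum_mul]
  exact Finset.sum_congr rfl (fun k _ => by ring)

private lemma dot_conj {N : ℕ} (A B : Matrix (Fin N) (Fin N) ℝ) (x y : Fin N → ℝ) :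
    (A *ᵥ x) ⬝ᵥ (B *ᵥ (A *ᵥ y)) = x ⬝ᵥ ((Aᵀ * B * A) *ᵥ y) := by
  rw [show A *ᵥ x = x ᵥ* Aᵀ from (Matrix.vecMul_transpose _ _).symm,
    Matrix.dotProduct_mulVec, Matrix.dotProduct_mulVec, Matrix.dotProduct_mulVec,
    Matrix.vecMul_vecMul, Matrix.vecMul_vecMul, Matrix.mul_assoc]

private lemma dot_diag_symm {N : ℕ} (p : Fin N → ℝ) (x y : Fin N → ℝ) :
    x ⬝ᵥ (Matrix.diagonal p *ᵥ y) = y ⬝ᵥ (Matrix.diagonal p *ᵥ x) := by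
  simp only [dotProduct, Matrix.mulVec_diagonal]
  exact Finset.sum_congr rfl (fun k _ => by ring)

private lemma reflection_isometry {N : ℕ} (p : Fin N → ℝ) (u : Fin N → ℝ) (c : ℝ)
    (hs : c * (u ⬝ᵥ (Matrix.diagonal p *ᵥ u)) = 2) :
    (1 - c • (vecMulVec u u * Matrix.diagonal p))ᵀ * Matrix.diagonal p *
      (1 - c • (vecMulVec u u * Matrix.diagonal p)) = Matrix.diagonal p := by
  set P := Matrix.diagonal p with hPdef
  set U := vecMulVec u u with hUdef
  have hPt : Pᵀ = P := Matrix.diagonal_transpose p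
  have hUt : Uᵀ = U := vmv_transpose u u
  have hWt : (1 - c • (U * P))ᵀ = 1 - c • (P * U) := by
    rw [transpose_sub, transpose_one, transpose_smul, transpose_mul, hPt, hUt]
  have key : U * P * U = (u ⬝ᵥ (P *ᵥ u)) • U := by
    rw [hUdef, vmv_mul, vmv_mul_vmv]
    congr 1
    rw [← Matrix.dotProduct_mulVec]
  rw [hWt]
  have expand : (1 - c • (P * U)) * P * (1 - c • (U * P)) =
      P - c • (P * U * P) - c • (P * U * P) + (c * c) • (P * (U * P * U) * P) := by
    simp only [mul_sub, sub_mul, Matrix.mul_smul, Matrix.smul_mul, one_mul, mul_one,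
      smul_smul, Matrix.mul_assoc]
    abel
  rw [expand, key]
  have : (c * c) • (P * ((u ⬝ᵥ (P *ᵥ u)) • U) * P) = (2 * c) • (P * U * P) := by
    rw [Matrix.mul_smul, Matrix.smul_mul, smul_smul]
    congr 1
    rw [mul_comm c c, mul_assoc, hs]; ring
  rw [this, two_mul]
  module

/-- The recursively defined sequence of products of P-reflections:
`khmaladzeV p q a 0 = V_{-1} = I` and, for `j ≥ 0`,
`khmaladzeV p q a (j+1) = V_j = W_j V_{j-1}` where `ã_j = V_{j-1} a_j`,
`c_j = 1/(1 - ⟨q_j, ã_j⟩_P)` and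
`W_j = I - c_j (q_j - ã_j)(q_j - ã_j)ᵀ D_p`. -/
noncomputable def khmaladzeV {N : ℕ} (p : Fin N → ℝ) (q a : ℕ → Fin N → ℝ) :
    ℕ → Matrix (Fin N) (Fin N) ℝ
  | 0 => 1
  | j + 1 =>
    let Vprev := khmaladzeV p q a j
    let atil := Vprev *ᵥ a j
    let c : ℝ := 1 / (1 - q j ⬝ᵥ (Matrix.diagonal p *ᵥ atil))
    (1 - c • (vecMulVec (q j - atil) (q j - atil) * Matrix.diagonal p)) * Vprev

private lemma khmaladzeV_succ {N : ℕ} (p : Fin N → ℝ) (q a : ℕ → Fin N → ℝ) (j : ℕ) :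
    khmaladzeV p q a (j+1) =
      (1 - (1/(1 - q j ⬝ᵥ (Matrix.diagonal p *ᵥ (khmaladzeV p q a j *ᵥ a j)))) •
        (vecMulVec (q j - khmaladzeV p q a j *ᵥ a j) (q j - khmaladzeV p q a j *ᵥ a j)
          * Matrix.diagonal p)) * khmaladzeV p q a j := rfl

private lemma khmaladzeV_aux {N K : ℕ} (p : Fin N → ℝ)
    (q a : ℕ → Fin N → ℝ)
    (hq : ∀ j ≤ K, ∀ k ≤ K,
      q j ⬝ᵥ (Matrix.diagonal p *ᵥ q k) = if j = k then 1 else 0)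
    (ha : ∀ j ≤ K, ∀ k ≤ K,
      a j ⬝ᵥ (Matrix.diagonal p *ᵥ a k) = if j = k then 1 else 0)
    (hne : ∀ j ≤ K,
      q j ⬝ᵥ (Matrix.diagonal p *ᵥ (khmaladzeV p q a j *ᵥ a j)) ≠ 1) :
    ∀ j ≤ K + 1,
      (khmaladzeV p q a j)ᵀ * Matrix.diagonal p * khmaladzeV p q a j = Matrix.diagonal p ∧
      ∀ k < j, khmaladzeV p q a j *ᵥ a k = q k := by
  intro j
  induction j with
  | zero =>
    intro _
    constructor
    · simp [khmaladzeV]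
    · intro k hk; omega
  | succ j ih =>
    intro hj1
    have hjK : j ≤ K := by omega
    obtain ⟨hP, hmap⟩ := ih (by omega)
    set P := Matrix.diagonal p with hPdef
    set V := khmaladzeV p q a j with hVdef
    set atil := V *ᵥ a j with hatil
    set d : ℝ := q j ⬝ᵥ (P *ᵥ atil) with hd
    set c : ℝ := 1 / (1 - d) with hc
    set u := q j - atil with hu
    have hrec : khmaladzeV p q a (j+1) = (1 - c • (vecMulVec u u * P)) * V :=
      khmaladzeV_succ p q a j
    have hd1 : (1 : ℝ) - d ≠ 0 := by
      have := hne j hjK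
      rw [← hd] at this
      exact sub_ne_zero.mpr (fun h => this h.symm)
    have hc1 : c * (1 - d) = 1 := by
      rw [hc, one_div, inv_mul_cancel₀ hd1]
    -- ⟨ã, ã⟩_P = 1
    have hnorm : atil ⬝ᵥ (P *ᵥ atil) = 1 := by
      rw [hatil, dot_conj, hP]
      simpa using ha j hjK j hjK
    -- ⟨ã, q_j⟩_P = d
    have hsym : atil ⬝ᵥ (P *ᵥ q j) = d := by
      rw [dot_diag_symm, ← hd]
    -- u ⬝ᵥ P ã = d - 1
    have hupa : u ⬝ᵥ (P *ᵥ atil) = d - 1 := by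
      rw [hu, sub_dotProduct, ← hd, hnorm]
    -- u ⬝ᵥ P q_j = 1 - d
    have hupq : u ⬝ᵥ (P *ᵥ q j) = 1 - d := by
      rw [hu, sub_dotProduct, hsym, hq j hjK j hjK]
      simp
    -- u ⬝ᵥ P u = 2 (1 - d)
    have hs : c * (u ⬝ᵥ (P *ᵥ u)) = 2 := by
      have : u ⬝ᵥ (P *ᵥ u) = 2 * (1 - d) := by
        rw [hu, Matrix.mulVec_sub, dotProduct_sub]
        rw [← hu]
        rw [hupq, hupa]; ring
      rw [this, mul_comm 2 (1-d), ← mul_assoc, hc1, one_mul]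
    constructor
    · -- isometry
      have assoc : Vᵀ * (1 - c • (vecMulVec u u * P))ᵀ * P *
          ((1 - c • (vecMulVec u u * P)) * V) =
          Vᵀ * ((1 - c • (vecMulVec u u * P))ᵀ * P * (1 - c • (vecMulVec u u * P))) * V := by
        simp only [Matrix.mul_assoc]
      rw [hrec, transpose_mul, assoc, reflection_isometry p u c hs, hP]
    · -- mapping
      intro k hk
      have hW : ∀ x : Fin N → ℝ,
          (1 - c • (vecMulVec u u * P)) *ᵥ x = x - (c * (u ⬝ᵥ (P *ᵥ x))) • u := by
        intro x
        rw [Matrix.sub_mulVec, Matrix.one_mulVec, Matrix.smul_mulVec,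
          ← Matrix.mulVec_mulVec, vmv_mulVec, smul_smul]
      rw [hrec, ← Matrix.mulVec_mulVec, hW]
      rcases Nat.lt_succ_iff_lt_or_eq.mp hk with hlt | heq
      · -- k < j
        rw [hmap k hlt]
        have h1 : q j ⬝ᵥ (P *ᵥ q k) = 0 := by
          have := hq j hjK k (by omega)
          rwa [if_neg (by omega)] at this
        have h2 : atil ⬝ᵥ (P *ᵥ q k) = 0 := by
          rw [hatil, ← hmap k hlt, dot_conj, hP]
          have := ha j hjK k (by omega)
          rwa [if_neg (by omega)] at this
        rw [hu, sub_dotProduct, h1, h2]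
        simp
      · -- k = j
        subst heq
        rw [← hatil, hupa]
        have : c * (d - 1) = -1 := by
          have : c * (d - 1) = -(c * (1 - d)) := by ring
          rw [this, hc1]
        rw [this, neg_one_smul, sub_neg_eq_add, hu]
        abel

/-- For two `D_p`-orthonormal families `(q_k)_{k=0}^K` and
`(a_k)_{k=0}^K`, with the recursively constructed `V_K` (a product of
P-reflections, assuming each `⟨q_j, ã_j⟩_P ≠ 1`), we have `V_K a_k = q_k`
for all `0 ≤ k ≤ K` and `V_Kᵀ D_p V_K = D_p`. -/
theorem khmaladzeV_maps_scores_and_preserves_norm {N K : ℕ}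
    (hK : 0 ≤ K) (hKN : K + 1 ≤ N) (p : Fin N → ℝ) (hp : ∀ j, 0 < p j)
    (q a : ℕ → Fin N → ℝ)
    (hq : ∀ j ≤ K, ∀ k ≤ K,
      q j ⬝ᵥ (Matrix.diagonal p *ᵥ q k) = if j = k then 1 else 0)
    (ha : ∀ j ≤ K, ∀ k ≤ K,
      a j ⬝ᵥ (Matrix.diagonal p *ᵥ a k) = if j = k then 1 else 0)
    (hne : ∀ j ≤ K,
      q j ⬝ᵥ (Matrix.diagonal p *ᵥ (khmaladzeV p q a j *ᵥ a j)) ≠ 1) :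
    (∀ k ≤ K, khmaladzeV p q a (K + 1) *ᵥ a k = q k) ∧
    (khmaladzeV p q a (K + 1))ᵀ * Matrix.diagonal p * khmaladzeV p q a (K + 1) =
      Matrix.diagonal p := by
  obtain ⟨h1, h2⟩ := khmaladzeV_aux p q a hq ha hne (K + 1) le_rfl
  exact ⟨fun k hk => h2 k (by omega), h1⟩
end
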